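/- If x_1, …, x_m are elements of F_q (q = p^e, p prime) that are linearly independent over F_p, then the m × m Moore-type matrix whose rows are (1,1,…,1), (x_1,…,x_m), (x_1^p,…,x_m^p), …, (x_1^{p^{m-2}},…,x_m^{p^{m-2}}) has nonzero determinant. -/

import Mathlib

open Polynomial in
lemma stmt1_aux (p e n : ℕ) [Fact p.Prime] (x : Fin (n+1) → GaloisField p e)
    (hx : LinearIndependent (ZMod p) x) :
    (Matrix.of fun i j : Fin (n+1) =>
        if (i : ℕ) = 0 then 1 else x j ^ p ^ ((i : ℕ) - 1)).det ≠ 0 := by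
  classical
  have hp : p.Prime := Fact.out
  set M : Matrix (Fin (n+1)) (Fin (n+1)) (GaloisField p e) := Matrix.of fun i j =>
    if (i : ℕ) = 0 then 1 else x j ^ p ^ ((i : ℕ) - 1) with hM
  intro hdet
  obtain ⟨a, ha, haM⟩ := Matrix.exists_vecMul_eq_zero_iff.mpr hdet
  -- exponents
  set E : Fin (n+1) → ℕ := fun i => if (i : ℕ) = 0 then 0 else p ^ ((i : ℕ) - 1) with hE
  have hEinj : Function.Injective E := by
    intro i i' h
    simp only [hE] at h
    ext
    split_ifs at h with h1 h2 h2
    · omega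
    · exact absurd h.symm (pow_ne_zero _ hp.ne_zero)
    · exact absurd h (pow_ne_zero _ hp.ne_zero)
    · have := Nat.pow_right_injective hp.two_le h
      omega
  set P : (GaloisField p e)[X] := ∑ i, C (a i) * X ^ E i with hP
  -- P is nonzero
  have hPne : P ≠ 0 := by
    obtain ⟨i₀, hi₀⟩ := Function.ne_iff.mp ha
    simp only [Pi.zero_apply] at hi₀
    intro h0
    have hc : P.coeff (E i₀) = a i₀ := by
      rw [hP, finset_sum_coeff]
      rw [Finset.sum_eq_single i₀]
      · simp [coeff_C_mul, coeff_X_pow]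
      · intro b _ hb
        rw [coeff_C_mul, coeff_X_pow, if_neg (fun h => hb (hEinj h.symm)), mul_zero]
      · simp
    rw [h0] at hc
    simp only [coeff_zero] at hc
    exact hi₀ hc.symm
  -- degree bound
  have hdeg : P.natDegree < p ^ n := by
    have h1 : ∀ i : Fin (n+1), E i < p ^ n := by
      intro i
      by_cases h : (i : ℕ) = 0
      · simp [hE, h, (by simpa using h : i = 0), Nat.pow_pos hp.pos]
      · have hi : 1 ≤ (i : ℕ) := Nat.pos_of_ne_zero h
        have hi2 : (i : ℕ) ≤ n := Nat.lt_succ_iff.mp i.isLt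
        simp only [hE, h, if_false]
        exact Nat.pow_lt_pow_right hp.one_lt (by omega)
    have hle : P.natDegree ≤ p ^ n - 1 := by
      rw [hP]
      apply Polynomial.natDegree_sum_le_of_forall_le
      intro i _
      exact (natDegree_C_mul_X_pow_le _ _).trans (by have := h1 i; omega)
    have hpn : 1 ≤ p ^ n := Nat.pow_pos hp.pos
    omega
  -- Frobenius fixes ZMod p
  have hzmod : ∀ (c : ZMod p) (t : ℕ), c ^ p ^ t = c := by
    intro c t
    induction t with
    | zero => simp
    | succ t ih => rw [pow_succ, pow_mul, ih, ZMod.pow_card]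
  -- roots
  have hroot : ∀ c : Fin (n+1) → ZMod p, (∑ j, c j) = 1 →
      P.IsRoot (∑ j, c j • x j) := by
    intro c hc
    have key : ∀ i : Fin (n+1), (∑ j, c j • x j) ^ E i = ∑ j, c j • M i j := by
      intro i
      by_cases h : (i : ℕ) = 0
      · have h0 : E i = 0 := by simp [hE, h, (by simpa using h : i = 0)]
        have hM0 : ∀ j, M i j = 1 := fun j => by simp [hM, h, (by simpa using h : i = 0)]
        simp only [h0, pow_zero, hM0]
        rw [← Finset.sum_smul, hc, one_smul]
      · have h0 : E i = p ^ ((i : ℕ) - 1) := by simp [hE, h, (by simpa using h : i ≠ 0)]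
        have hM0 : ∀ j, M i j = x j ^ p ^ ((i : ℕ) - 1) := fun j => by simp [hM, h, (by simpa using h : i ≠ 0)]
        simp only [h0, hM0]
        rw [sum_pow_char_pow]
        apply Finset.sum_congr rfl
        intro j _
        rw [Algebra.smul_def, Algebra.smul_def, mul_pow, ← map_pow, hzmod]
    have heval : P.eval (∑ j, c j • x j) = ∑ j, c j • (Matrix.vecMul a M j) := by
      rw [hP]
      simp only [eval_finset_sum, eval_mul, eval_C, eval_pow, eval_X]
      rw [Finset.sum_congr rfl (fun i _ => by rw [key i, Finset.mul_sum])]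
      rw [Finset.sum_comm]
      apply Finset.sum_congr rfl
      intro j _
      rw [Matrix.vecMul, dotProduct, Finset.smul_sum]
      apply Finset.sum_congr rfl
      intro i _
      rw [mul_smul_comm]
    rw [Polynomial.IsRoot, heval, haM]
    simp
  -- injectivity from linear independence
  have hxinj := Fintype.linearIndependent_iff.mp hx
  have hinj : Function.Injective
      (fun c : {c : Fin (n+1) → ZMod p // (∑ j, c j) = 1} => ∑ j, c.1 j • x j) := by
    intro c c' hcc
    have hsub : ∑ j, (c.1 j - c'.1 j) • x j = 0 := by
      simp only [sub_smul]
      rw [Finset.sum_sub_distrib]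
      simpa using sub_eq_zero_of_eq hcc
    have h3 := hxinj _ hsub
    apply Subtype.ext
    funext j
    exact sub_eq_zero.mp (h3 j)
  -- cardinality of the affine hyperplane
  have hcard : Fintype.card {c : Fin (n+1) → ZMod p // (∑ j, c j) = 1} = p ^ n := by
    have equ : {c : Fin (n+1) → ZMod p // (∑ j, c j) = 1} ≃ (Fin n → ZMod p) := by
      refine ⟨fun c j => c.1 j.succ, fun d => ⟨Fin.cons (1 - ∑ j, d j) d, ?_⟩, ?_, ?_⟩
      · rw [Fin.sum_univ_succ]
        simp
      · intro c
        apply Subtype.ext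
        funext j
        refine Fin.cases ?_ (fun k => ?_) j
        · have h2 := c.2
          rw [Fin.sum_univ_succ] at h2
          simp only [Fin.cons_zero]
          linear_combination -h2
        · simp
      · intro d
        funext j
        simp
    rw [Fintype.card_congr equ]
    simp [ZMod.card]
  have hle2 : p ^ n ≤ P.roots.toFinset.card := by
    have hmem : ∀ c : {c : Fin (n+1) → ZMod p // (∑ j, c j) = 1},
        (∑ j, c.1 j • x j) ∈ P.roots.toFinset := by
      intro c
      rw [Multiset.mem_toFinset, Polynomial.mem_roots hPne]
      exact hroot c.1 c.2
    have hf : Function.Injective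
        (fun c : {c : Fin (n+1) → ZMod p // (∑ j, c j) = 1} =>
          (⟨∑ j, c.1 j • x j, hmem c⟩ : {y // y ∈ P.roots.toFinset})) := by
      intro c c' h
      exact hinj (congrArg Subtype.val h)
    calc p ^ n = _ := hcard.symm
      _ ≤ Fintype.card {y // y ∈ P.roots.toFinset} := Fintype.card_le_of_injective _ hf
      _ = P.roots.toFinset.card := Fintype.card_coe _
  have h1 : P.roots.toFinset.card ≤ Multiset.card P.roots := Multiset.toFinset_card_le _
  have h2 : Multiset.card P.roots ≤ P.natDegree := Polynomial.card_roots' P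
  exact absurd ((hle2.trans h1).trans h2) (not_le.mpr hdeg)

/-- Moore-type matrix with first row all ones: nonzero determinant for
`F_p`-linearly independent `x_1, …, x_m`. -/
theorem stmt1 (p e m : ℕ) [Fact p.Prime] (x : Fin m → GaloisField p e)
    (hx : LinearIndependent (ZMod p) x) :
    (Matrix.of fun i j : Fin m =>
        if (i : ℕ) = 0 then 1 else x j ^ p ^ ((i : ℕ) - 1)).det ≠ 0 := by
  obtain _ | n := m
  · simp [Matrix.det_isEmpty]
  · exact stmt1_aux p e n x hx
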